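/- Let M = (S, ρ) be a matroid scheme and a an atom of S, and let T_M(x,y) = Σ_{w∈S} (x−1)^{ρ(M)−ρ(w)} (y−1)^{|w|−ρ(w)} be the Tutte polynomial. Then: (1) if a is neither a loop nor an isthmus, T_M(x,y) = T_{M−a}(x,y) + T_{M/a}(x,y); (2) if a is a loop, T_M(x,y) = y · T_{M/a}(x,y); (3) if a is an isthmus, T_M(x,y) = (x−1) · T_{M−a}(x,y) + T_{M/a}(x,y). -/

import Mathlib

/-- The set of minimal upper bounds of `x` and `y` (denoted `x ∨ y` in the paper). -/
def mub {S : Type*} [PartialOrder S] (x y : S) : Set S :=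
  {u | x ≤ u ∧ y ≤ u ∧ ∀ v, x ≤ v → y ≤ v → v ≤ u → v = u}

/-- The set of maximal lower bounds of `x` and `y` (denoted `x ∧ y` in the paper). -/
def mlb {S : Type*} [PartialOrder S] (x y : S) : Set S :=
  {l | l ≤ x ∧ l ≤ y ∧ ∀ m, m ≤ x → m ≤ y → l ≤ m → m = l}

/-- The set of minimal upper bounds of a subset `T`. -/
def mubSet {S : Type*} [PartialOrder S] (T : Set S) : Set S :=
  {u | (∀ t ∈ T, t ≤ u) ∧ ∀ v, (∀ t ∈ T, t ≤ v) → v ≤ u → v = u}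

/-- The number of atoms below `x`, i.e. `|x|`, the rank of `x` in a simplicial poset. -/
noncomputable def natRank {S : Type*} [PartialOrder S] [OrderBot S] (x : S) : ℕ :=
  Nat.card {a : S // IsAtom a ∧ a ≤ x}

/-- A finite bounded-below poset is simplicial if every lower interval is isomorphic to
the Boolean lattice of subsets of the set of atoms below. -/
def IsSimplicialPoset (S : Type*) [PartialOrder S] [OrderBot S] [Fintype S] : Prop :=
  ∀ x : S, Nonempty (Set.Iic x ≃o Set {a : S // IsAtom a ∧ a ≤ x})

/-- A matroid scheme: a rank function `ρ` on a finite simplicial poset `S`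
satisfying (M1)–(M5). -/
structure IsMatroidScheme {S : Type*} [PartialOrder S] [OrderBot S] [Fintype S]
    (ρ : S → ℕ) : Prop where
  simplicial : IsSimplicialPoset S
  M1 : ∀ x : S, ρ x ≤ natRank x
  M2 : ∀ ⦃x y : S⦄, x ≤ y → ρ x ≤ ρ y
  M3 : ∀ x y u l : S, u ∈ mub x y → l ∈ mlb x y → ρ u + ρ l ≤ ρ x + ρ y
  M4 : ∀ x y l : S, l ∈ mlb x y → ρ x = ρ l → (mub x y).Nonempty
  M5 : ∀ x y : S, ρ x < ρ y →
    ∃ a : S, IsAtom a ∧ a ≤ y ∧ ¬ a ≤ x ∧ (mub x a).Nonempty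

/-- `cl` is the closure operator of a matroid scheme `(S, ρ)`:
`cl x` is the greatest element above `x` of the same rank. -/
def IsClosureFun {S : Type*} [PartialOrder S] (ρ : S → ℕ) (cl : S → S) : Prop :=
  ∀ x : S, x ≤ cl x ∧ ρ (cl x) = ρ x ∧ ∀ y : S, x ≤ y → ρ y = ρ x → y ≤ cl x

/-- The bases of a matroid scheme: the maximal independent elements. -/
def Bases {S : Type*} [PartialOrder S] [OrderBot S] (ρ : S → ℕ) : Set S :=
  {x | ρ x = natRank x ∧ ∀ w, ρ w = natRank w → x ≤ w → w = x}

/-- The circuits of a matroid scheme: the minimal dependent elements. -/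
def Circuits {S : Type*} [PartialOrder S] [OrderBot S] (ρ : S → ℕ) : Set S :=
  {x | ρ x < natRank x ∧ ∀ y, ρ y < natRank y → y ≤ x → y = x}

/-- `c` is the complement `x ∖ a` of `a` in the Boolean lattice `S_{≤ x}`. -/
def IsComplementIn {S : Type*} [PartialOrder S] [OrderBot S] (c a x : S) : Prop :=
  c ≤ x ∧ a ≤ x ∧ (∀ l : S, l ≤ c → l ≤ a → l = ⊥) ∧
    (∀ u : S, u ≤ x → c ≤ u → a ≤ u → u = x)

/-- The rank of a matroid scheme: the common value of `ρ` on maximal elements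
(equal to the maximum value of `ρ`). -/
noncomputable def schemeRank {S : Type*} [Fintype S] (ρ : S → ℕ) : ℕ :=
  sSup (Set.range ρ)

/-- The Tutte polynomial of a matroid scheme, as a two-variable integer function. -/
noncomputable def tutte {S : Type*} [PartialOrder S] [OrderBot S] [Fintype S]
    (ρ : S → ℕ) (x y : ℤ) : ℤ :=
  ∑ w : S, (x - 1) ^ (schemeRank ρ - ρ w) * (y - 1) ^ (natRank w - ρ w)

/-- An element of a poset is an order-atom if it covers a global minimum. -/
def OrdAtom {P : Type*} [PartialOrder P] (a : P) : Prop :=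
  ∃ b : P, (∀ z : P, b ≤ z) ∧ b ⋖ a

/-- A partial order is a geometric lattice: it is bounded below, every pair has a least
upper bound and greatest lower bound, it is atomistic, and it is (upper) semimodular. -/
def IsGeomLatOrder (P : Type*) [PartialOrder P] : Prop :=
  (∃ b : P, ∀ x : P, b ≤ x) ∧
  (∀ x y : P, ∃ u : P, IsLUB {x, y} u) ∧
  (∀ x y : P, ∃ l : P, IsGLB {x, y} l) ∧
  (∀ x : P, IsLUB {a : P | OrdAtom a ∧ a ≤ x} x) ∧
  (∀ x y m j : P, IsGLB {x, y} m → IsLUB {x, y} j → m ⋖ x → y ⋖ j)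

/-- A geometric poset: a finite bounded-below poset with rank function `rk`
satisfying (G1) and (G2). -/
def IsGeometricPoset (P : Type*) [PartialOrder P] [OrderBot P] [Fintype P]
    (rk : P → ℕ) : Prop :=
  rk ⊥ = 0 ∧
  (∀ ⦃x y : P⦄, x ≤ y → rk x ≤ rk y) ∧
  (∀ x y : P, x ⋖ y → rk y = rk x + 1) ∧
  (∀ m : P, IsMax m → IsGeomLatOrder (Set.Iic m)) ∧
  (∀ (x : P) (A : Set P), (∀ a ∈ A, IsAtom a) →
    ∀ y ∈ mubSet A, rk x < rk y → rk y = Nat.card A →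
      ∃ a ∈ A, ¬ a ≤ x ∧ ∃ w : P, x ≤ w ∧ a ≤ w)

section Aux
variable {S : Type*} [PartialOrder S] [OrderBot S] [Fintype S]

/-- The set of atoms below `x`. -/
def aset (x : S) : Set S := {c | IsAtom c ∧ c ≤ x}

lemma natRank_eq (x : S) : natRank x = (aset x).ncard := rfl

lemma aset_mono {x y : S} (h : x ≤ y) : aset x ⊆ aset y :=
  fun c hc => ⟨hc.1, hc.2.trans h⟩

lemma natRank_mono {x y : S} (h : x ≤ y) : natRank x ≤ natRank y := by
  rw [natRank_eq, natRank_eq]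
  exact Set.ncard_le_ncard (aset_mono h) (Set.toFinite _)

lemma aset_bot : aset (⊥ : S) = ∅ := by
  ext c; simp only [aset, Set.mem_setOf_eq, Set.mem_empty_iff_false, iff_false, not_and]
  intro hc hcb; exact hc.1 (le_bot_iff.mp hcb)

lemma natRank_bot : natRank (⊥ : S) = 0 := by
  rw [natRank_eq, aset_bot, Set.ncard_empty]

lemma atom_le_atom {a c : S} (ha : IsAtom a) (h : c ≤ a) : c = ⊥ ∨ c = a :=
  (lt_or_eq_of_le h).imp (ha.2 _) id

lemma aset_atom {a : S} (ha : IsAtom a) : aset a = {a} := by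
  ext c; constructor
  · rintro ⟨hc, hca⟩
    rcases atom_le_atom ha hca with h | h
    · exact absurd h hc.1
    · exact h
  · rintro rfl; exact ⟨ha, le_rfl⟩

lemma natRank_atom {a : S} (ha : IsAtom a) : natRank a = 1 := by
  rw [natRank_eq, aset_atom ha, Set.ncard_singleton]

lemma isAtom_Iic_iff {u : S} {x : Set.Iic u} : IsAtom x ↔ IsAtom x.val := by
  constructor
  · rintro ⟨h1, h2⟩
    refine ⟨fun hb => h1 (Subtype.ext hb), fun z hz => ?_⟩
    have hzu : z ≤ u := hz.le.trans x.2
    have := h2 ⟨z, hzu⟩ (by exact hz)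
    exact congrArg Subtype.val this
  · rintro ⟨h1, h2⟩
    refine ⟨fun hb => h1 (congrArg Subtype.val hb), fun z hz => ?_⟩
    exact Subtype.ext (h2 z.val (by exact hz))

lemma simplicial_core (hs : IsSimplicialPoset S) (u : S) :
    (∀ x y : Set.Iic u, aset x.val ⊆ aset y.val → x ≤ y) ∧
    (∀ B : Set S, B ⊆ aset u → ∃ x : Set.Iic u, aset x.val = B) := by
  classical
  obtain ⟨e⟩ := hs u
  set A := {a : S // IsAtom a ∧ a ≤ u} with hA
  have hAatom : ∀ c : A, IsAtom (e ⟨c.1, c.2.2⟩) := by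
    intro c
    rw [e.isAtom_iff]
    exact isAtom_Iic_iff.mpr c.2.1
  choose f hf using fun c : A => Set.isAtom_iff.mp (hAatom c)
  have key : ∀ (x : Set.Iic u) (c : A), (c.1 ≤ x.1 ↔ f c ∈ e x) := by
    intro x c
    have h1 : c.1 ≤ x.1 ↔ (⟨c.1, c.2.2⟩ : Set.Iic u) ≤ x := Iff.rfl
    rw [h1, ← e.le_iff_le, hf c]
    exact Set.singleton_subset_iff
  have fsurj : Function.Surjective f := by
    intro g
    have hg : IsAtom ({g} : Set A) := Set.isAtom_iff.mpr ⟨g, rfl⟩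
    have h2 : IsAtom (e.symm {g}) := by
      rw [← e.isAtom_iff, e.apply_symm_apply]; exact hg
    have h3 : IsAtom (e.symm {g} : Set.Iic u).val := isAtom_Iic_iff.mp h2
    set c₀ : A := ⟨(e.symm {g}).val, h3, (e.symm {g}).2⟩ with hc₀
    refine ⟨c₀, ?_⟩
    have h4 : e ⟨c₀.1, c₀.2.2⟩ = {g} := by
      rw [show (⟨c₀.1, c₀.2.2⟩ : Set.Iic u) = e.symm {g} from Subtype.ext rfl]
      exact e.apply_symm_apply _
    rw [hf c₀] at h4
    exact Set.singleton_eq_singleton_iff.mp h4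
  have finj : Function.Injective f := by
    intro c c' hcc
    have h1 := hf c
    rw [hcc, ← hf c'] at h1
    have h2 := e.injective h1
    have h3 : (c.1 : S) = c'.1 := congrArg (fun z : Set.Iic u => z.val) h2
    exact Subtype.ext h3
  constructor
  · intro x y hss
    rw [← e.le_iff_le]
    intro g hg
    obtain ⟨c, rfl⟩ := fsurj g
    have h1 : c.1 ≤ x.1 := (key x c).mpr hg
    have h2 : c.1 ∈ aset y.val := hss ⟨c.2.1, h1⟩
    exact (key y c).mp h2.2
  · intro B hB
    refine ⟨e.symm (f '' {c : A | c.1 ∈ B}), ?_⟩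
    ext d; constructor
    · rintro ⟨hd, hdx⟩
      have hdu : d ≤ u := hdx.trans (e.symm _).2
      have h1 := (key _ (⟨d, hd, hdu⟩ : A)).mp hdx
      rw [e.apply_symm_apply] at h1
      obtain ⟨c', hc', hcc⟩ := h1
      have h5 := finj hcc
      rw [h5] at hc'
      exact hc'
    · intro hd
      have hdu := hB hd
      refine ⟨hdu.1, (key _ (⟨d, hdu.1, hdu.2⟩ : A)).mpr ?_⟩
      rw [e.apply_symm_apply]
      exact ⟨⟨d, hdu.1, hdu.2⟩, hd, rfl⟩

lemma le_of_aset_subset (hs : IsSimplicialPoset S) {u x y : S} (hx : x ≤ u) (hy : y ≤ u)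
    (hss : aset x ⊆ aset y) : x ≤ y :=
  (simplicial_core hs u).1 ⟨x, hx⟩ ⟨y, hy⟩ hss

lemma eq_of_aset_eq (hs : IsSimplicialPoset S) {u x y : S} (hx : x ≤ u) (hy : y ≤ u)
    (hss : aset x = aset y) : x = y :=
  le_antisymm (le_of_aset_subset hs hx hy hss.le) (le_of_aset_subset hs hy hx hss.ge)

lemma exists_realize (hs : IsSimplicialPoset S) {u : S} {B : Set S} (hB : B ⊆ aset u) :
    ∃ x, x ≤ u ∧ aset x = B := by
  obtain ⟨x, hx⟩ := (simplicial_core hs u).2 B hB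
  exact ⟨x.val, x.2, hx⟩

lemma eq_of_le_natRank_le (hs : IsSimplicialPoset S) {x y : S} (hxy : x ≤ y)
    (hn : natRank y ≤ natRank x) : y = x := by
  have h1 : aset x = aset y :=
    Set.eq_of_subset_of_ncard_le (aset_mono hxy) hn (Set.toFinite _)
  exact (eq_of_aset_eq hs hxy le_rfl h1).symm

end Aux

section Aux2
variable {S : Type*} [PartialOrder S] [OrderBot S] [Fintype S]

lemma mub_comm {x y z : S} (h : z ∈ mub x y) : z ∈ mub y x :=
  ⟨h.2.1, h.1, fun v h1 h2 h3 => h.2.2 v h2 h1 h3⟩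

lemma exists_mub_atom (hs : IsSimplicialPoset S) {u x c : S} (hx : x ≤ u) (hc : c ∈ aset u) :
    ∃ z, z ∈ mub x c ∧ z ≤ u ∧ aset z = aset x ∪ {c} := by
  have hB : aset x ∪ {c} ⊆ aset u :=
    Set.union_subset (aset_mono hx) (Set.singleton_subset_iff.mpr hc)
  obtain ⟨z, hzu, hz⟩ := exists_realize hs hB
  have hxz : x ≤ z := le_of_aset_subset hs hx hzu (hz ▸ Set.subset_union_left)
  have hcz : c ≤ z := by
    have h2 : c ∈ aset z := hz ▸ Set.mem_union_right _ rfl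
    exact h2.2
  refine ⟨z, ⟨hxz, hcz, fun v h1 h2 h3 => ?_⟩, hzu, hz⟩
  have hzv : z ≤ v := by
    apply le_of_aset_subset hs hzu (h3.trans hzu)
    rw [hz]
    exact Set.union_subset (aset_mono h1) (Set.singleton_subset_iff.mpr ⟨hc.1, h2⟩)
  exact le_antisymm h3 hzv

lemma aset_of_mem_mub (hs : IsSimplicialPoset S) {x c z : S} (hc : IsAtom c)
    (hz : z ∈ mub x c) : aset z = aset x ∪ {c} := by
  obtain ⟨hxz, hcz, hmin⟩ := hz
  have hB : aset x ∪ {c} ⊆ aset z :=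
    Set.union_subset (aset_mono hxz) (Set.singleton_subset_iff.mpr ⟨hc, hcz⟩)
  obtain ⟨w, hwz, hw⟩ := exists_realize hs hB
  have hxw : x ≤ w := le_of_aset_subset hs hxz hwz (hw ▸ Set.subset_union_left)
  have hcw : c ≤ w := by
    have h2 : c ∈ aset w := hw ▸ Set.mem_union_right _ rfl
    exact h2.2
  have := hmin w hxw hcw hwz
  rw [← this, hw]

lemma bot_mem_mlb {x c : S} (hc : IsAtom c) (hcx : ¬ c ≤ x) : (⊥ : S) ∈ mlb x c := by
  refine ⟨bot_le, bot_le, fun m hmx hmc _ => ?_⟩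
  rcases atom_le_atom hc hmc with h | h
  · exact h
  · exact absurd (h ▸ hmx) hcx

lemma bot_mem_mlb' {x c : S} (hc : IsAtom c) (hcx : ¬ c ≤ x) : (⊥ : S) ∈ mlb c x := by
  refine ⟨bot_le, bot_le, fun m hmc hmx _ => ?_⟩
  rcases atom_le_atom hc hmc with h | h
  · exact h
  · exact absurd (h ▸ hmx) hcx

variable {ρ : S → ℕ}

lemma rho_bot (h : IsMatroidScheme ρ) : ρ (⊥ : S) = 0 :=
  Nat.le_zero.mp (natRank_bot (S := S) ▸ h.M1 ⊥)

lemma rho_le_r (w : S) : ρ w ≤ schemeRank ρ :=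
  le_csSup (Set.finite_range ρ).bddAbove ⟨w, rfl⟩

lemma r_mem (ρ : S → ℕ) : ∃ w : S, ρ w = schemeRank ρ := by
  have hne : (Set.range ρ).Nonempty := ⟨ρ ⊥, ⟨⊥, rfl⟩⟩
  exact hne.csSup_mem (Set.finite_range ρ)

lemma rho_atom_le_one (h : IsMatroidScheme ρ) {a : S} (ha : IsAtom a) : ρ a ≤ 1 :=
  (natRank_atom ha) ▸ h.M1 a

lemma exists_max_above (x : S) : ∃ z : S, x ≤ z ∧ IsMax z := by
  classical
  obtain ⟨z, hz, hmax⟩ := (Finset.univ.filter (fun y => x ≤ y)).exists_maximal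
    ⟨x, by simp⟩
  simp only [Finset.mem_filter, Finset.mem_univ, true_and] at hz
  refine ⟨z, hz, fun c hc => ?_⟩
  have hcmem : c ∈ Finset.univ.filter (fun y => x ≤ y) := by
    simp only [Finset.mem_filter, Finset.mem_univ, true_and]; exact hz.trans hc
  have h2 : ¬ z < c := fun hlt => hlt.not_ge (hmax (by simpa using hcmem) hlt.le)
  by_contra hne
  exact h2 (lt_of_le_of_ne hc (fun he => hne (he ▸ le_rfl)))

lemma rho_max (h : IsMatroidScheme ρ) {z : S} (hz : IsMax z) : ρ z = schemeRank ρ := by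
  refine le_antisymm (rho_le_r z) ?_
  obtain ⟨w, hw⟩ := r_mem ρ
  by_contra hlt
  push_neg at hlt
  obtain ⟨b, hb, _, hbz, v, hv⟩ := h.M5 z w (by omega)
  exact hbz (hv.2.1.trans (hz hv.1))

lemma rho_mub_atom_le (h : IsMatroidScheme ρ) {x c z : S} (hc : IsAtom c) (hcx : ¬ c ≤ x)
    (hz : z ∈ mub x c) : ρ z ≤ ρ x + ρ c := by
  have h3 := h.M3 x c z ⊥ hz (bot_mem_mlb hc hcx)
  rw [rho_bot h] at h3
  omega

end Aux2

section Aux3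
variable {S : Type*} [PartialOrder S] [OrderBot S] [Fintype S] {ρ : S → ℕ}

lemma span (h : IsMatroidScheme ρ) (hs : IsSimplicialPoset S) {u b : S} (hbu : b ≤ u)
    (hstep : ∀ c, c ∈ aset u → ¬ c ≤ b → ∃ z, z ∈ mub b c ∧ z ≤ u ∧ ρ z ≤ ρ b) :
    ρ u ≤ ρ b := by
  suffices H : ∀ n x, b ≤ x → x ≤ u → ρ x ≤ ρ b →
      (aset u).ncard - (aset x).ncard ≤ n → ρ u ≤ ρ b by
    exact H ((aset u).ncard) b le_rfl hbu le_rfl (by omega)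
  intro n
  induction n with
  | zero =>
    intro x hbx hxu hx hcard
    have hsub := aset_mono hxu
    have hle : (aset x).ncard ≤ (aset u).ncard := Set.ncard_le_ncard hsub (Set.toFinite _)
    have heq : aset x = aset u :=
      Set.eq_of_subset_of_ncard_le hsub (by omega) (Set.toFinite _)
    have hxe : x = u := eq_of_aset_eq hs hxu le_rfl heq
    rw [← hxe]; exact hx
  | succ n ih =>
    intro x hbx hxu hx hcard
    by_cases hax : aset u ⊆ aset x
    · have heq : aset x = aset u := Set.Subset.antisymm (aset_mono hxu) hax
      have hxe : x = u := eq_of_aset_eq hs hxu le_rfl heq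
      rw [← hxe]; exact hx
    · obtain ⟨c, hcu, hcx⟩ := Set.not_subset.mp hax
      have hcx' : ¬ c ≤ x := fun hle => hcx ⟨hcu.1, hle⟩
      obtain ⟨x', hx'm, hx'u, hx'aset⟩ := exists_mub_atom hs hxu hcu
      have hcb : ¬ c ≤ b := fun hcb => hcx' (hcb.trans hbx)
      obtain ⟨z, hzm, hzu, hz⟩ := hstep c hcu hcb
      have hzaset : aset z = aset b ∪ {c} := aset_of_mem_mub hs hcu.1 hzm
      have hzx' : z ≤ x' := by
        apply le_of_aset_subset hs hzu hx'u
        rw [hzaset, hx'aset]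
        exact Set.union_subset_union_left _ (aset_mono hbx)
      have hmub : x' ∈ mub x z :=
        ⟨hx'm.1, hzx', fun v hxv hzv hvx' => hx'm.2.2 v hxv (hzm.2.1.trans hzv) hvx'⟩
      have hmlb : b ∈ mlb x z := by
        refine ⟨hbx, hzm.1, fun m hmx hmz hbm => ?_⟩
        have h1 : aset m ⊆ aset b := by
          intro d hd
          have hdz : d ∈ aset z := aset_mono hmz hd
          rw [hzaset] at hdz
          rcases hdz with hdb | hdc
          · exact hdb
          · exact absurd (hdc ▸ (aset_mono hmx hd)) hcx
        exact eq_of_aset_eq hs (hmx.trans hxu) (hbx.trans hxu)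
          (Set.Subset.antisymm h1 (aset_mono hbm))
      have hsubm := h.M3 x z x' b hmub hmlb
      have hρx' : ρ x' ≤ ρ b := by omega
      have hcard' : (aset x').ncard = (aset x).ncard + 1 := by
        rw [hx'aset, Set.union_singleton, Set.ncard_insert_of_notMem hcx (Set.toFinite _)]
      have hlt : (aset x).ncard < (aset u).ncard :=
        Set.ncard_lt_ncard ⟨aset_mono hxu, fun hcontra => hcx (hcontra hcu)⟩ (Set.toFinite _)
      exact ih x' (hbx.trans hx'm.1) hx'u hρx' (by omega)

lemma max_indep_rho (h : IsMatroidScheme ρ) (hs : IsSimplicialPoset S) {u b : S}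
    (hbu : b ≤ u) (hind : ρ b = natRank b)
    (hmax : ∀ z, z ≤ u → ρ z = natRank z → b ≤ z → z = b) : ρ b = ρ u := by
  refine le_antisymm (h.M2 hbu) ?_
  apply span h hs hbu
  intro c hcu hcb
  obtain ⟨z, hzm, hzu, hzaset⟩ := exists_mub_atom hs hbu hcu
  refine ⟨z, hzm, hzu, ?_⟩
  have hub : ρ z ≤ ρ b + ρ c := rho_mub_atom_le h hcu.1 hcb hzm
  have hc1 : ρ c ≤ 1 := rho_atom_le_one h hcu.1
  by_contra hgt
  push_neg at hgt
  have hcb' : c ∉ aset b := fun hmem => hcb hmem.2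
  have hnz : natRank z = natRank b + 1 := by
    rw [natRank_eq, natRank_eq, hzaset, Set.union_singleton,
      Set.ncard_insert_of_notMem hcb' (Set.toFinite _)]
  have hzind : ρ z = natRank z := by
    have := h.M1 z
    omega
  have hzb := hmax z hzu hzind hzm.1
  exact hcb (hzb ▸ hzm.2.1)

lemma basis_rho (h : IsMatroidScheme ρ) (hs : IsSimplicialPoset S) {b : S}
    (hb : b ∈ Bases ρ) : ρ b = schemeRank ρ := by
  obtain ⟨z, hbz, hz⟩ := exists_max_above b
  have h1 := max_indep_rho h hs hbz hb.1 (fun w _ hw hbw => hb.2 w hw hbw)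
  rw [h1, rho_max h hz]

lemma exists_basis_le (h : IsMatroidScheme ρ) (hs : IsSimplicialPoset S) {w : S}
    (hw : ρ w = schemeRank ρ) : ∃ b ∈ Bases ρ, b ≤ w := by
  classical
  set s : Finset S := Finset.univ.filter (fun x => x ≤ w ∧ ρ x = natRank x) with hsdef
  have hbots : (⊥ : S) ∈ s := by
    simp only [hsdef, Finset.mem_filter, Finset.mem_univ, true_and]
    exact ⟨bot_le, by rw [rho_bot h, natRank_bot]⟩
  obtain ⟨b, hbs, hbmax⟩ := s.exists_max_image natRank ⟨⊥, hbots⟩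
  simp only [hsdef, Finset.mem_filter, Finset.mem_univ, true_and] at hbs
  obtain ⟨hbw, hbind⟩ := hbs
  have hρ : ρ b = ρ w := by
    apply max_indep_rho h hs hbw hbind
    intro z hzw hzind hbz
    apply eq_of_le_natRank_le hs hbz
    apply hbmax
    simp only [hsdef, Finset.mem_filter, Finset.mem_univ, true_and]
    exact ⟨hzw, hzind⟩
  refine ⟨b, ⟨hbind, fun v hvind hbv => ?_⟩, hbw⟩
  apply eq_of_le_natRank_le hs hbv
  have h2 : ρ v ≤ schemeRank ρ := rho_le_r v
  omega

lemma exists_basis (h : IsMatroidScheme ρ) (hs : IsSimplicialPoset S) :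
    ∃ b, b ∈ Bases ρ := by
  obtain ⟨w, hw⟩ := r_mem ρ
  obtain ⟨b, hb, _⟩ := exists_basis_le h hs hw
  exact ⟨b, hb⟩

lemma isthmus_rho_lt (h : IsMatroidScheme ρ) (hs : IsSimplicialPoset S) {a : S}
    (ith : ∀ b ∈ Bases ρ, a ≤ b) {w : S} (hw : ¬ a ≤ w) : ρ w < schemeRank ρ := by
  rcases lt_or_eq_of_le (rho_le_r (ρ := ρ) w) with hlt | heq
  · exact hlt
  · obtain ⟨b, hb, hbw⟩ := exists_basis_le h hs heq
    exact absurd ((ith b hb).trans hbw) hw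

end Aux3

section Aux4
variable {S : Type*} [PartialOrder S] [OrderBot S] [Fintype S]

lemma exists_atom_le (hs : IsSimplicialPoset S) {x : S} (hx : x ≠ ⊥) :
    ∃ c, IsAtom c ∧ c ≤ x := by
  by_contra hc
  push_neg at hc
  apply hx
  refine eq_of_aset_eq hs le_rfl bot_le ?_
  rw [aset_bot]
  ext d
  simp only [Set.mem_empty_iff_false, iff_false]
  rintro ⟨hd1, hd2⟩
  exact hc d hd1 hd2

lemma cover_struct (hs : IsSimplicialPoset S) {a b : S} (ha : IsAtom a) (hab : a ⋖ b) :
    ∃ c, (IsAtom c ∧ c ≤ b ∧ c ≠ a) ∧ aset b = {a, c} ∧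
      (∀ d, IsAtom d → d ≤ b → d ≠ a → d = c) := by
  have hab' : a ≤ b := hab.1.le
  have hnot : ¬ aset b ⊆ {a} := by
    intro hsub
    have h1 : aset b ⊆ aset a := by rw [aset_atom ha]; exact hsub
    exact absurd (le_of_aset_subset hs le_rfl hab' h1) (not_le_of_gt hab.1)
  obtain ⟨c, hcb, hca⟩ := Set.not_subset.mp hnot
  have hcnea : c ≠ a := fun he => hca (he ▸ rfl)
  have huniq : ∀ d, IsAtom d → d ≤ b → d ≠ a → d = c := by
    intro d hd hdb hda
    by_contra hdc
    have hBsub : ({a, c} : Set S) ⊆ aset b := by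
      intro e he
      rcases he with he | he
      · exact he ▸ ⟨ha, hab'⟩
      · exact he ▸ hcb
    obtain ⟨z, hzb, hzaset⟩ := exists_realize hs hBsub
    have haz : a ≤ z := (show a ∈ aset z from hzaset ▸ Set.mem_insert _ _).2
    have hcz : c ≤ z := (show c ∈ aset z from hzaset ▸ Set.mem_insert_of_mem _ rfl).2
    have hanez : a ≠ z := by
      intro he
      rcases atom_le_atom ha (he ▸ hcz) with h | h
      · exact hcb.1.1 h
      · exact hcnea h
    have hznb : z ≠ b := by
      intro he
      have : d ∈ aset z := he ▸ ⟨hd, hdb⟩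
      rw [hzaset] at this
      rcases this with h | h
      · exact hda h
      · exact hdc h
    exact hab.2 (lt_of_le_of_ne haz hanez) (lt_of_le_of_ne hzb hznb) |>.elim
  refine ⟨c, ⟨hcb.1, hcb.2, hcnea⟩, ?_, huniq⟩
  ext d
  constructor
  · rintro ⟨hd1, hd2⟩
    by_cases hda : d = a
    · exact Or.inl hda
    · exact Or.inr (huniq d hd1 hd2 hda)
  · rintro (h | h)
    · exact h ▸ ⟨ha, hab'⟩
    · exact h ▸ hcb

lemma natRank_del (hs : IsSimplicialPoset S) {a : S} (ha : IsAtom a)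
    [inst : OrderBot {x : S // ¬ a ≤ x}]
    (hbot : ((⊥ : {x : S // ¬ a ≤ x}) : S) = ⊥) (w : {x : S // ¬ a ≤ x}) :
    natRank w = natRank w.val := by
  have hnal : ∀ b : {x : S // ¬ a ≤ x}, ∀ c : S, IsAtom c → c ≤ b.val → ¬ a ≤ c := by
    intro b c hc hcb hac
    rcases atom_le_atom hc hac with h | h
    · exact ha.1 h
    · exact b.2 (h ▸ hcb)
  have hAiff : ∀ b : {x : S // ¬ a ≤ x}, IsAtom b ↔ IsAtom b.val := by
    intro b
    constructor
    · rintro ⟨h1, h2⟩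
      have hbne : b.val ≠ ⊥ := fun hb => h1 (Subtype.ext (hb.trans hbot.symm))
      refine ⟨hbne, fun z hz => ?_⟩
      by_contra hzb
      obtain ⟨d, hd, hdz⟩ := exists_atom_le hs hzb
      have hdb : d < b.val := lt_of_le_of_lt hdz hz
      have had : ¬ a ≤ d := hnal b d hd hdb.le
      have h3 := h2 ⟨d, had⟩ (show (⟨d, had⟩ : {x : S // ¬ a ≤ x}) < b from hdb)
      have h4 : d = ⊥ := (congrArg Subtype.val h3).trans hbot
      exact hd.1 h4
    · rintro ⟨h1, h2⟩
      refine ⟨fun hb => h1 ((congrArg Subtype.val hb).trans hbot), fun z hz => ?_⟩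
      have h3 := h2 z.val (show z.val < b.val from hz)
      exact Subtype.ext (h3.trans hbot.symm)
  exact Nat.card_congr
    ⟨fun b => ⟨b.1.1, (hAiff b.1).mp b.2.1, b.2.2⟩,
     fun c => ⟨⟨c.1, hnal w c.1 c.2.1 c.2.2⟩, (hAiff _).mpr c.2.1, c.2.2⟩,
     fun b => Subtype.ext (Subtype.ext rfl), fun c => Subtype.ext rfl⟩

lemma natRank_con (hs : IsSimplicialPoset S) {a : S} (ha : IsAtom a)
    [inst : OrderBot {z : S // a ≤ z}]
    (hbot : ((⊥ : {z : S // a ≤ z}) : S) = a) (w : {z : S // a ≤ z}) :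
    natRank w = natRank w.val - 1 := by
  classical
  have hAiff : ∀ b : {z : S // a ≤ z}, IsAtom b ↔ a ⋖ b.val := by
    intro b
    constructor
    · rintro ⟨h1, h2⟩
      refine ⟨lt_of_le_of_ne b.2 (fun he => h1 (Subtype.ext (hbot.trans he).symm)), ?_⟩
      intro z hz1 hz2
      have h3 := h2 ⟨z, hz1.le⟩ (show (⟨z, hz1.le⟩ : {z : S // a ≤ z}) < b from hz2)
      have h4 : z = a := (congrArg Subtype.val h3).trans hbot
      exact hz1.ne' h4
    · rintro ⟨h1, h2⟩
      constructor
      · intro hb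
        exact absurd ((congrArg Subtype.val hb).trans hbot).symm h1.ne
      · intro z hz
        rcases lt_or_eq_of_le z.2 with haz | haz
        · exact absurd (show z.val < b.val from hz) (h2 haz)
        · exact Subtype.ext (haz.symm.trans hbot.symm)
  have e1 : {b : {z : S // a ≤ z} // IsAtom b ∧ b ≤ w} ≃ {b : S // (a ⋖ b) ∧ b ≤ w.val} :=
    ⟨fun b => ⟨b.1.1, (hAiff b.1).mp b.2.1, b.2.2⟩,
     fun c => ⟨⟨c.1, c.2.1.1.le⟩, (hAiff _).mpr c.2.1, c.2.2⟩,
     fun b => Subtype.ext (Subtype.ext rfl), fun c => Subtype.ext rfl⟩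
  have h1 : natRank w = Nat.card {b : S // (a ⋖ b) ∧ b ≤ w.val} := Nat.card_congr e1
  set F : S → S := fun b => if hb : ∃ c, IsAtom c ∧ c ≤ b ∧ c ≠ a then hb.choose else ⊥ with hF
  have hFspec : ∀ b, (a ⋖ b) → IsAtom (F b) ∧ F b ≤ b ∧ F b ≠ a ∧ aset b = {a, F b} := by
    intro b hb
    obtain ⟨c, ⟨hc1, hc2, hc3⟩, hcaset, hcuniq⟩ := cover_struct hs ha hb
    have hex : ∃ c, IsAtom c ∧ c ≤ b ∧ c ≠ a := ⟨c, hc1, hc2, hc3⟩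
    have hFb : F b = hex.choose := dif_pos hex
    obtain ⟨g1, g2, g3⟩ := hex.choose_spec
    have h2 : hex.choose = c := hcuniq _ g1 g2 g3
    rw [hFb, h2]
    exact ⟨hc1, hc2, hc3, hcaset⟩
  have hbij : Set.BijOn F {b : S | (a ⋖ b) ∧ b ≤ w.val} (aset w.val \ {a}) := by
    refine ⟨fun b hb => ?_, fun b hb b' hb' hFF => ?_, fun c hcmem => ?_⟩
    · obtain ⟨g1, g2, g3, _⟩ := hFspec b hb.1
      exact ⟨⟨g1, g2.trans hb.2⟩, g3⟩
    · obtain ⟨_, _, _, h4⟩ := hFspec b hb.1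
      obtain ⟨_, _, _, h4'⟩ := hFspec b' hb'.1
      exact eq_of_aset_eq hs hb.2 hb'.2 (h4.trans (hFF ▸ h4'.symm))
    · obtain ⟨hcw, hca⟩ := hcmem
      have hcnea : c ≠ a := fun he => hca (he ▸ rfl)
      have hBsub : ({a, c} : Set S) ⊆ aset w.val := by
        intro d hd
        rcases hd with hd | hd
        · subst hd; exact ⟨ha, w.2⟩
        · subst hd; exact hcw
      obtain ⟨b, hbw, hbaset⟩ := exists_realize hs hBsub
      have hab2 : a ≤ b := (show a ∈ aset b from hbaset ▸ Set.mem_insert _ _).2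
      have hcb : c ≤ b := (show c ∈ aset b from hbaset ▸ Set.mem_insert_of_mem _ rfl).2
      have hanb : a ≠ b := by
        intro he
        rcases atom_le_atom ha (he ▸ hcb) with hx | hx
        · exact hcw.1.1 hx
        · exact hcnea hx
      have hcov : a ⋖ b := by
        refine ⟨lt_of_le_of_ne hab2 hanb, fun z hz1 hz2 => ?_⟩
        by_cases hcz : c ∈ aset z
        · have hbz : aset b ⊆ aset z := by
            rw [hbaset]
            intro d hd
            rcases hd with hd | hd
            · subst hd; exact ⟨ha, hz1.le⟩
            · subst hd; exact hcz
          exact absurd (le_of_aset_subset hs le_rfl hz2.le hbz) (not_le_of_gt hz2)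
        · have hza : aset z ⊆ aset a := by
            rw [aset_atom ha]
            intro d hd
            have hd2 : d ∈ aset b := aset_mono hz2.le hd
            rw [hbaset] at hd2
            rcases hd2 with hx | hx
            · exact hx
            · exact absurd (hx ▸ hd) hcz
          exact absurd (le_of_aset_subset hs hz2.le hab2 hza) (not_le_of_gt hz1)
      refine ⟨b, ⟨hcov, hbw⟩, ?_⟩
      obtain ⟨g1, g2, g3, g4⟩ := hFspec b hcov
      have hcmem2 : c ∈ ({a, F b} : Set S) := g4 ▸ (hbaset ▸ Set.mem_insert_of_mem _ rfl)
      rcases hcmem2 with hx | hx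
      · exact absurd hx hcnea
      · exact hx.symm
  have h2 : Nat.card {b : S // (a ⋖ b) ∧ b ≤ w.val} = (aset w.val \ {a}).ncard :=
    Nat.card_congr (hbij.equiv F)
  rw [h1, h2, Set.ncard_diff_singleton_of_mem (show a ∈ aset w.val from ⟨ha, w.2⟩), natRank_eq]

lemma schemeRank_eq_of {T : Type*} [Fintype T] (g : T → ℕ) (m : ℕ)
    (hub : ∀ t, g t ≤ m) (hmem : ∃ t, g t = m) : schemeRank g = m := by
  obtain ⟨t, ht⟩ := hmem
  apply le_antisymm
  · refine csSup_le ?_ ?_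
    · exact ⟨g t, t, rfl⟩
    · rintro _ ⟨s, rfl⟩
      exact hub s
  · rw [← ht]
    refine le_csSup (Set.finite_range g).bddAbove ?_
    exact ⟨t, rfl⟩

lemma sum_split {α : Type*} [Fintype α] (p : α → Prop) [DecidablePred p]
    [Fintype {x // p x}] [Fintype {x // ¬ p x}] (g : α → ℤ) :
    ∑ x, g x = (∑ x : {x // p x}, g x.val) + (∑ x : {x // ¬ p x}, g x.val) := by
  rw [← Finset.sum_filter_add_sum_filter_not Finset.univ p g]
  congr 1
  · exact Finset.sum_subtype _ (by simp) g
  · exact Finset.sum_subtype _ (by simp) g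

end Aux4

section Aux5
variable {S : Type*} [PartialOrder S] [OrderBot S] [Fintype S] {ρ : S → ℕ}

lemma compl_exists (h : IsMatroidScheme ρ) (hs : IsSimplicialPoset S) {w a : S}
    (ha : IsAtom a) (haw : a ≤ w) :
    ∃ c, c ≤ w ∧ ¬ a ≤ c ∧ aset c = aset w \ {a} ∧ ρ w ≤ ρ c + ρ a := by
  obtain ⟨c, hcw, hc⟩ := exists_realize hs (Set.diff_subset : aset w \ {a} ⊆ aset w)
  have hac : ¬ a ≤ c := by
    intro hle
    have h1 : a ∈ aset c := ⟨ha, hle⟩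
    rw [hc] at h1
    exact h1.2 rfl
  have hmub : w ∈ mub c a := by
    refine ⟨hcw, haw, fun v hcv hav hvw => ?_⟩
    have h1 : aset w ⊆ aset v := by
      intro d hd
      by_cases hda : d = a
      · exact hda ▸ ⟨ha, hav⟩
      · exact aset_mono hcv (hc ▸ ⟨hd, hda⟩)
    exact le_antisymm hvw (le_of_aset_subset hs le_rfl hvw h1)
  have h3 := h.M3 c a w ⊥ hmub (bot_mem_mlb ha hac)
  rw [rho_bot h] at h3
  exact ⟨c, hcw, hac, hc, by omega⟩

lemma dep_of_loop (h : IsMatroidScheme ρ) (hs : IsSimplicialPoset S) {a w : S}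
    (ha : IsAtom a) (hl : ρ a = 0) (haw : a ≤ w) : ρ w + 1 ≤ natRank w := by
  obtain ⟨c, hcw, hac, hc, hro⟩ := compl_exists h hs ha haw
  have h1 : ρ c ≤ natRank c := h.M1 c
  have h2 : natRank c = natRank w - 1 := by
    rw [natRank_eq, natRank_eq, hc,
      Set.ncard_diff_singleton_of_mem (show a ∈ aset w from ⟨ha, haw⟩)]
  have h3 : 1 ≤ natRank w := by
    rw [natRank_eq]
    have : (aset w).Nonempty := ⟨a, ha, haw⟩
    have := (Set.ncard_pos (Set.toFinite _)).mpr this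
    omega
  omega

lemma isthmus_compl (h : IsMatroidScheme ρ) (hs : IsSimplicialPoset S) {a b : S}
    (ha : IsAtom a) (hb : b ∈ Bases ρ) (hab : a ≤ b) :
    ∃ c, ¬ a ≤ c ∧ ρ c = schemeRank ρ - 1 ∧ 1 ≤ schemeRank ρ ∧ ρ a = 1 := by
  obtain ⟨c, hcw, hac, hc, hro⟩ := compl_exists h hs ha hab
  have hbr : ρ b = schemeRank ρ := basis_rho h hs hb
  have h1 : ρ c ≤ natRank c := h.M1 c
  have h2 : natRank c = natRank b - 1 := by
    rw [natRank_eq, natRank_eq, hc,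
      Set.ncard_diff_singleton_of_mem (show a ∈ aset b from ⟨ha, hab⟩)]
  have h3 : 1 ≤ natRank b := by
    rw [natRank_eq]
    have h4 : (aset b).Nonempty := ⟨a, ha, hab⟩
    have := (Set.ncard_pos (Set.toFinite _)).mpr h4
    omega
  have hbi : ρ b = natRank b := hb.1
  have ha1 : ρ a ≤ 1 := rho_atom_le_one h ha
  have ha0 : ρ a ≠ 0 := by
    intro hl
    have := dep_of_loop h hs ha hl hab
    omega
  exact ⟨c, hac, by omega, by omega, by omega⟩

lemma loop_mub (h : IsMatroidScheme ρ) (hs : IsSimplicialPoset S) {a : S}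
    (ha : IsAtom a) (hl : ρ a = 0) {w : S} (hw : ¬ a ≤ w) :
    ∃ u, u ∈ mub w a ∧ ∀ u', u' ∈ mub w a → u' = u := by
  have hne : (mub a w).Nonempty :=
    h.M4 a w ⊥ (bot_mem_mlb' ha hw) (by rw [rho_bot h, hl])
  obtain ⟨u, hu⟩ := hne
  have hu' : u ∈ mub w a := mub_comm hu
  refine ⟨u, hu', fun u' hu'' => ?_⟩
  by_contra hne'
  have hasetu : aset u = aset w ∪ {a} := aset_of_mem_mub hs ha hu'
  have hasetu' : aset u' = aset w ∪ {a} := aset_of_mem_mub hs ha hu''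
  have hρu : ρ u = ρ w := by
    have := rho_mub_atom_le h ha hw hu'
    have := h.M2 hu'.1
    omega
  have hρu' : ρ u' = ρ w := by
    have := rho_mub_atom_le h ha hw hu''
    have := h.M2 hu''.1
    omega
  have hwm : w ∈ mlb u' u := by
    refine ⟨hu''.1, hu'.1, fun m hmu' hmu hwm => ?_⟩
    by_cases ham : a ≤ m
    · have h1 : aset u' ⊆ aset m := by
        rw [hasetu']
        exact Set.union_subset (aset_mono hwm) (Set.singleton_subset_iff.mpr ⟨ha, ham⟩)
      have h2 : m = u' := le_antisymm hmu' (le_of_aset_subset hs le_rfl hmu' h1)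
      exact absurd (hu'.2.2 u' hu''.1 hu''.2.1 (h2 ▸ hmu)) hne'
    · have h1 : aset m ⊆ aset w := by
        intro d hd
        have h2 : d ∈ aset u := aset_mono hmu hd
        rw [hasetu] at h2
        rcases h2 with h2 | h2
        · exact h2
        · exact absurd (h2 ▸ hd).2 ham
      exact eq_of_aset_eq hs hmu hu'.1 (Set.Subset.antisymm h1 (aset_mono hwm))
  obtain ⟨v, hv⟩ := h.M4 u' u w hwm (by omega)
  exact hne' (eq_of_aset_eq hs hv.1 hv.2.1 (hasetu'.trans hasetu.symm))

end Aux5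
section Aux6
variable {S : Type*} [PartialOrder S] [OrderBot S] [Fintype S] {ρ : S → ℕ}

lemma con_sum_eq (h : IsMatroidScheme ρ) (hs : IsSimplicialPoset S) {a : S} (ha : IsAtom a)
    [instCB : OrderBot {z : S // a ≤ z}] [instCF : Fintype {z : S // a ≤ z}]
    (hbotC : ((⊥ : {z : S // a ≤ z}) : S) = a) (hρa : ρ a = 1) (x y : ℤ) :
    ∑ w : {z : S // a ≤ z},
        (x - 1) ^ (schemeRank ρ - ρ w.val) * (y - 1) ^ (natRank w.val - ρ w.val)
      = tutte (fun w : {z : S // a ≤ z} => ρ w.val - ρ a) x y := by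
  obtain ⟨z₀, haz₀, hz₀⟩ := exists_max_above a
  have hrcon : schemeRank (fun w : {z : S // a ≤ z} => ρ w.val - ρ a) = schemeRank ρ - ρ a :=
    schemeRank_eq_of _ _ (fun t => Nat.sub_le_sub_right (rho_le_r t.val) _)
      ⟨⟨z₀, haz₀⟩, by show ρ z₀ - ρ a = schemeRank ρ - ρ a; rw [rho_max h hz₀]⟩
  unfold tutte
  rw [hrcon]
  apply Finset.sum_congr rfl
  intro w _
  rw [natRank_con hs ha hbotC w]
  have h1 : 1 ≤ ρ w.val := hρa ▸ h.M2 w.2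
  have h2 : ρ w.val ≤ schemeRank ρ := rho_le_r w.val
  have h3 : ρ w.val ≤ natRank w.val := h.M1 w.val
  have e1 : schemeRank ρ - ρ a - (ρ w.val - ρ a) = schemeRank ρ - ρ w.val := by omega
  have e2 : natRank w.val - 1 - (ρ w.val - ρ a) = natRank w.val - ρ w.val := by omega
  rw [e1, e2]

end Aux6

theorem statement17_aux {S : Type*} [PartialOrder S] [OrderBot S] [Fintype S]
    (ρ : S → ℕ) (h : IsMatroidScheme ρ) (a : S) (ha : IsAtom a)
    [instDB : OrderBot {x : S // ¬ a ≤ x}] [instDF : Fintype {x : S // ¬ a ≤ x}]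
    [instCB : OrderBot {z : S // a ≤ z}] [instCF : Fintype {z : S // a ≤ z}]
    (hbotD : ((⊥ : {x : S // ¬ a ≤ x}) : S) = ⊥)
    (hbotC : ((⊥ : {z : S // a ≤ z}) : S) = a) :
    (ρ a ≠ 0 → ¬ (∀ b ∈ Bases ρ, a ≤ b) →
      ∀ x y : ℤ, tutte ρ x y =
        tutte (fun w : {x : S // ¬ a ≤ x} => ρ w.val) x y +
        tutte (fun w : {z : S // a ≤ z} => ρ w.val - ρ a) x y) ∧
    (ρ a = 0 →
      ∀ x y : ℤ, tutte ρ x y =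
        y * tutte (fun w : {z : S // a ≤ z} => ρ w.val - ρ a) x y) ∧
    ((∀ b ∈ Bases ρ, a ≤ b) →
      ∀ x y : ℤ, tutte ρ x y =
        (x - 1) * tutte (fun w : {x : S // ¬ a ≤ x} => ρ w.val) x y +
        tutte (fun w : {z : S // a ≤ z} => ρ w.val - ρ a) x y) := by
  classical
  have hs := h.simplicial
  refine ⟨?_, ?_, ?_⟩
  · -- Case 1: neither loop nor isthmus
    intro hnl hni x y
    push_neg at hni
    obtain ⟨b, hbB, hab⟩ := hni
    have hρa : ρ a = 1 := by
      have := rho_atom_le_one h ha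
      omega
    have hrdel : schemeRank (fun w : {x : S // ¬ a ≤ x} => ρ w.val) = schemeRank ρ :=
      schemeRank_eq_of _ _ (fun t => rho_le_r t.val) ⟨⟨b, hab⟩, basis_rho h hs hbB⟩
    have hsplit :
        ∑ w : S, (x - 1) ^ (schemeRank ρ - ρ w) * (y - 1) ^ (natRank w - ρ w)
          = (∑ w : {z : S // a ≤ z},
              (x - 1) ^ (schemeRank ρ - ρ w.val) * (y - 1) ^ (natRank w.val - ρ w.val))
            + ∑ w : {x : S // ¬ a ≤ x},
              (x - 1) ^ (schemeRank ρ - ρ w.val) * (y - 1) ^ (natRank w.val - ρ w.val) :=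
      sum_split (fun w : S => a ≤ w)
        (fun w => (x - 1) ^ (schemeRank ρ - ρ w) * (y - 1) ^ (natRank w - ρ w))
    show tutte ρ x y = _
    unfold tutte
    rw [hsplit, add_comm]
    congr 1
    · -- deletion part
      rw [hrdel]
      apply Finset.sum_congr rfl
      intro w _
      rw [natRank_del hs ha hbotD w]
    · -- contraction part
      exact con_sum_eq h hs ha hbotC hρa x y
  · -- Case 2: loop
    intro hl x y
    have hsplit :
        ∑ w : S, (x - 1) ^ (schemeRank ρ - ρ w) * (y - 1) ^ (natRank w - ρ w)
          = (∑ w : {z : S // a ≤ z},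
              (x - 1) ^ (schemeRank ρ - ρ w.val) * (y - 1) ^ (natRank w.val - ρ w.val))
            + ∑ w : {x : S // ¬ a ≤ x},
              (x - 1) ^ (schemeRank ρ - ρ w.val) * (y - 1) ^ (natRank w.val - ρ w.val) :=
      sum_split (fun w : S => a ≤ w)
        (fun w => (x - 1) ^ (schemeRank ρ - ρ w) * (y - 1) ^ (natRank w - ρ w))
    obtain ⟨z₀, haz₀, hz₀⟩ := exists_max_above a
    have hrcon : schemeRank (fun w : {z : S // a ≤ z} => ρ w.val - ρ a) = schemeRank ρ := by
      have := schemeRank_eq_of (fun w : {z : S // a ≤ z} => ρ w.val - ρ a) (schemeRank ρ - ρ a)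
        (fun t => Nat.sub_le_sub_right (rho_le_r t.val) _)
        ⟨⟨z₀, haz₀⟩, by show ρ z₀ - ρ a = schemeRank ρ - ρ a; rw [rho_max h hz₀]⟩
      rw [this, hl, Nat.sub_zero]
    have hconpart :
        ∑ w : {z : S // a ≤ z},
            (x - 1) ^ (schemeRank ρ - ρ w.val) * (y - 1) ^ (natRank w.val - ρ w.val)
          = (y - 1) * tutte (fun w : {z : S // a ≤ z} => ρ w.val - ρ a) x y := by
      unfold tutte
      rw [hrcon, Finset.mul_sum]
      apply Finset.sum_congr rfl
      intro w _
      rw [natRank_con hs ha hbotC w]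
      have hdep := dep_of_loop h hs ha hl w.2
      have e1 : schemeRank ρ - (ρ w.val - ρ a) = schemeRank ρ - ρ w.val := by omega
      have e2 : natRank w.val - ρ w.val = ((natRank w.val - 1) - (ρ w.val - ρ a)) + 1 := by
        omega
      rw [e1, e2, pow_succ]
      ring
    have hdelpart :
        ∑ w : {x : S // ¬ a ≤ x},
            (x - 1) ^ (schemeRank ρ - ρ w.val) * (y - 1) ^ (natRank w.val - ρ w.val)
          = tutte (fun w : {z : S // a ≤ z} => ρ w.val - ρ a) x y := by
      have hΦex : ∀ w : {x : S // ¬ a ≤ x},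
          ∃ u, u ∈ mub w.val a ∧ ∀ u', u' ∈ mub w.val a → u' = u :=
        fun w => loop_mub h hs ha hl w.2
      choose Φ0 hΦm hΦu using hΦex
      have hΦaset : ∀ w, aset (Φ0 w) = aset w.val ∪ {a} :=
        fun w => aset_of_mem_mub hs ha (hΦm w)
      have hΦρ : ∀ w, ρ (Φ0 w) = ρ w.val := by
        intro w
        have h1 := rho_mub_atom_le h ha w.2 (hΦm w)
        have h2 := h.M2 (hΦm w).1
        omega
      have hΦnat : ∀ w, natRank (Φ0 w) = natRank w.val + 1 := by
        intro w
        have hna : a ∉ aset w.val := fun hmem => w.2 hmem.2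
        rw [natRank_eq, natRank_eq, hΦaset w, Set.union_singleton,
          Set.ncard_insert_of_notMem hna (Set.toFinite _)]
      set Φ : {x : S // ¬ a ≤ x} → {z : S // a ≤ z} :=
        fun w => ⟨Φ0 w, (hΦm w).2.1⟩ with hΦdef
      have hbij : Function.Bijective Φ := by
        constructor
        · intro w w' he
          have hv : Φ0 w = Φ0 w' := congrArg Subtype.val he
          have h1 : aset w.val = aset w'.val := by
            have e1 := hΦaset w
            have e2 := hΦaset w'
            rw [hv] at e1
            have e3 : aset w.val ∪ {a} = aset w'.val ∪ {a} := e1.symm.trans e2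
            ext d
            constructor
            · intro hd
              have h4 : d ∈ aset w'.val ∪ {a} := e3 ▸ Set.mem_union_left _ hd
              rcases h4 with h4 | h4
              · exact h4
              · exact absurd (h4 ▸ hd).2 w.2
            · intro hd
              have h4 : d ∈ aset w.val ∪ {a} := e3.symm ▸ Set.mem_union_left _ hd
              rcases h4 with h4 | h4
              · exact h4
              · exact absurd (h4 ▸ hd).2 w'.2
          exact Subtype.ext (eq_of_aset_eq hs (hΦm w).1 (hv ▸ (hΦm w').1) h1)
        · intro u
          obtain ⟨w', hw'u, hw'aset⟩ :=
            exists_realize hs (Set.diff_subset : aset u.val \ {a} ⊆ aset u.val)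
          have hnaw' : ¬ a ≤ w' := by
            intro hle
            have h1 : a ∈ aset w' := ⟨ha, hle⟩
            rw [hw'aset] at h1
            exact h1.2 rfl
          have hmubu : u.val ∈ mub w' a := by
            refine ⟨hw'u, u.2, fun v hw'v hav hvu => ?_⟩
            have h1 : aset u.val ⊆ aset v := by
              intro d hd
              by_cases hda : d = a
              · subst hda; exact ⟨ha, hav⟩
              · exact aset_mono hw'v (hw'aset ▸ ⟨hd, hda⟩)
            exact le_antisymm hvu (le_of_aset_subset hs le_rfl hvu h1)
          exact ⟨⟨w', hnaw'⟩, Subtype.ext (hΦu ⟨w', hnaw'⟩ u.val hmubu).symm⟩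
      unfold tutte
      rw [hrcon]
      apply Fintype.sum_bijective Φ hbij
      intro w
      have hρ' : ρ (Φ w).val = ρ w.val := hΦρ w
      have hn' : natRank (Φ w).val = natRank w.val + 1 := hΦnat w
      have hnc : natRank (Φ w) = natRank (Φ w).val - 1 := natRank_con hs ha hbotC (Φ w)
      have e1 : schemeRank ρ - (ρ (Φ w).val - ρ a) = schemeRank ρ - ρ w.val := by omega
      have e2 : natRank (Φ w) - (ρ (Φ w).val - ρ a) = natRank w.val - ρ w.val := by omega
      show (x - 1) ^ (schemeRank ρ - ρ w.val) * (y - 1) ^ (natRank w.val - ρ w.val)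
          = (x - 1) ^ (schemeRank ρ - (ρ (Φ w).val - ρ a))
            * (y - 1) ^ (natRank (Φ w) - (ρ (Φ w).val - ρ a))
      rw [e1, e2]
    rw [show tutte ρ x y = ∑ w : S,
        (x - 1) ^ (schemeRank ρ - ρ w) * (y - 1) ^ (natRank w - ρ w) from rfl,
      hsplit, hconpart, hdelpart]
    ring
  · -- Case 3: isthmus
    intro ith x y
    obtain ⟨b, hbB⟩ := exists_basis h hs
    have hab := ith b hbB
    obtain ⟨c, hac, hc, hr1, hρa⟩ := isthmus_compl h hs ha hbB hab
    have hlt : ∀ v : S, ¬ a ≤ v → ρ v < schemeRank ρ := fun v hv => isthmus_rho_lt h hs ith hv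
    have hrdel : schemeRank (fun w : {x : S // ¬ a ≤ x} => ρ w.val) = schemeRank ρ - 1 :=
      schemeRank_eq_of _ _ (fun t => by have := hlt t.val t.2; omega) ⟨⟨c, hac⟩, hc⟩
    have hsplit :
        ∑ w : S, (x - 1) ^ (schemeRank ρ - ρ w) * (y - 1) ^ (natRank w - ρ w)
          = (∑ w : {z : S // a ≤ z},
              (x - 1) ^ (schemeRank ρ - ρ w.val) * (y - 1) ^ (natRank w.val - ρ w.val))
            + ∑ w : {x : S // ¬ a ≤ x},
              (x - 1) ^ (schemeRank ρ - ρ w.val) * (y - 1) ^ (natRank w.val - ρ w.val) :=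
      sum_split (fun w : S => a ≤ w)
        (fun w => (x - 1) ^ (schemeRank ρ - ρ w) * (y - 1) ^ (natRank w - ρ w))
    show tutte ρ x y = _
    unfold tutte
    rw [hsplit, add_comm]
    congr 1
    · -- deletion part with (x-1) factor
      rw [hrdel, Finset.mul_sum]
      apply Finset.sum_congr rfl
      intro w _
      rw [natRank_del hs ha hbotD w]
      have h1 := hlt w.val w.2
      have e1 : schemeRank ρ - ρ w.val = ((schemeRank ρ - 1) - ρ w.val) + 1 := by omega
      rw [e1, pow_succ]
      ring
    · exact con_sum_eq h hs ha hbotC hρa x y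


/-- Theorem 10.2: the Tutte polynomial of a matroid scheme satisfies a
deletion–contraction recurrence with respect to an atom `a`. -/
theorem statement17 {S : Type*} [PartialOrder S] [OrderBot S] [Fintype S]
    (ρ : S → ℕ) (h : IsMatroidScheme ρ) (a : S) (ha : IsAtom a) :
    letI : OrderBot {x : S // ¬ a ≤ x} :=
      { bot := ⟨⊥, fun hab => ha.1 (le_bot_iff.mp hab)⟩
        bot_le := fun x => by exact bot_le (a := x.val) }
    letI : Fintype {x : S // ¬ a ≤ x} := Fintype.ofFinite _
    letI : OrderBot {z : S // a ≤ z} :=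
      { bot := ⟨a, le_refl a⟩
        bot_le := fun z => by exact z.2 }
    letI : Fintype {z : S // a ≤ z} := Fintype.ofFinite _
    -- (1) `a` neither a loop nor an isthmus
    (ρ a ≠ 0 → ¬ (∀ b ∈ Bases ρ, a ≤ b) →
      ∀ x y : ℤ, tutte ρ x y =
        tutte (fun w : {x : S // ¬ a ≤ x} => ρ w.val) x y +
        tutte (fun w : {z : S // a ≤ z} => ρ w.val - ρ a) x y) ∧
    -- (2) `a` a loop
    (ρ a = 0 →
      ∀ x y : ℤ, tutte ρ x y =
        y * tutte (fun w : {z : S // a ≤ z} => ρ w.val - ρ a) x y) ∧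
    -- (3) `a` an isthmus
    ((∀ b ∈ Bases ρ, a ≤ b) →
      ∀ x y : ℤ, tutte ρ x y =
        (x - 1) * tutte (fun w : {x : S // ¬ a ≤ x} => ρ w.val) x y +
        tutte (fun w : {z : S // a ≤ z} => ρ w.val - ρ a) x y) := by
  exact statement17_aux ρ h a ha
    (instDB := { bot := ⟨⊥, fun hab => ha.1 (le_bot_iff.mp hab)⟩
                 bot_le := fun x => by exact bot_le (a := x.val) })
    (instDF := Fintype.ofFinite _)
    (instCB := { bot := ⟨a, le_refl a⟩
                 bot_le := fun z => by exact z.2 })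
    (instCF := Fintype.ofFinite _)
    rfl rfl
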